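/- For all z in the closed unit disk of the complex plane, |κ₁(z)| ≤ 1, with equality if and only if z = 1, where κ₁ is the degree-1 arc-cosine kernel function extended analytically from its Taylor series. -/

import Mathlib

open Real Complex
open MeasureTheory
open scoped ENNReal

/-- Maclaurin coefficients of the degree-1 arc-cosine kernel κ₁. -/
noncomputable def k1Coeff : ℕ → ℝ := fun m =>
  if m = 0 then 1 / Real.pi
  else if m = 1 then 1 / 2
  else if m % 2 = 0 then
    (Nat.doubleFactorial (m - 3) : ℝ) /
      ((m - 1 : ℝ) * (Nat.factorial (m / 2)) * 2 ^ (m / 2) * Real.pi)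
  else 0

/-- κ₁ on the closed unit disk, defined by its Maclaurin series. -/
noncomputable def k1Series (z : ℂ) : ℂ := ∑' n : ℕ, (k1Coeff n : ℂ) * z ^ n

lemma centralBinom_le_four_pow (n : ℕ) : Nat.centralBinom n ≤ 4 ^ n := by
  have h : Nat.centralBinom n ≤ ∑ i ∈ Finset.range (2*n+1), (2*n).choose i :=
    Finset.single_le_sum (f := fun i => (2*n).choose i) (fun i _ => Nat.zero_le _)
      (by simp [Nat.lt_succ_iff]; omega)
  simpa [Nat.sum_range_choose, pow_mul] using h

lemma catalan_mul_factorial (k : ℕ) :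
    catalan k * (k+1).factorial = 2 ^ k * Nat.doubleFactorial (2*k - 1) := by
  rcases Nat.eq_zero_or_pos k with rfl | hk
  · simp
  have h1 : (2*k).factorial = Nat.doubleFactorial (2*k) * Nat.doubleFactorial (2*k-1) := by
    have := Nat.factorial_eq_mul_doubleFactorial (2*k - 1)
    have h2 : 2*k - 1 + 1 = 2*k := by omega
    rwa [h2] at this
  have h3 : Nat.doubleFactorial (2*k) = 2^k * k.factorial := Nat.doubleFactorial_two_mul k
  have h4 : Nat.centralBinom k * (k.factorial * k.factorial) = (2*k).factorial := by
    have h := Nat.choose_mul_factorial_mul_factorial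
      (show k ≤ 2*k by omega)
    have h2 : 2*k - k = k := by omega
    rw [h2] at h
    rw [Nat.centralBinom, ← h]; ring
  have h5 : (k+1) * catalan k = Nat.centralBinom k := succ_mul_catalan_eq_centralBinom k
  have hfac : catalan k * (k+1).factorial * k.factorial
      = 2 ^ k * Nat.doubleFactorial (2*k-1) * k.factorial := by
    calc catalan k * (k+1).factorial * k.factorial
        = ((k+1) * catalan k) * (k.factorial * k.factorial) := by
          rw [Nat.factorial_succ]; ring
      _ = (2*k).factorial := by rw [h5, h4]
      _ = 2^k * Nat.doubleFactorial (2*k-1) * k.factorial := by rw [h1, h3]; ring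
  exact Nat.eq_of_mul_eq_mul_right k.factorial_pos hfac

/-- the shifted even coefficients -/
noncomputable def dd (m : ℕ) : ℝ := (catalan m : ℝ) / 2 ^ (2*m+1)

lemma dd_nonneg (m : ℕ) : 0 ≤ dd m :=
  div_nonneg (Nat.cast_nonneg _) (by positivity)

lemma dd_le_half (m : ℕ) : dd m ≤ 1/2 := by
  rw [dd, div_le_iff₀ (by positivity)]
  have hc : catalan m ≤ 4 ^ m := by
    calc catalan m ≤ (m+1) * catalan m := Nat.le_mul_of_pos_left _ m.succ_pos
      _ = Nat.centralBinom m := succ_mul_catalan_eq_centralBinom m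
      _ ≤ 4^m := centralBinom_le_four_pow m
  calc (catalan m : ℝ) ≤ 4^m := by exact_mod_cast hc
    _ = 1/2 * 2^(2*m+1) := by rw [pow_succ, pow_mul]; norm_num; ring

lemma dd_conv (m : ℕ) :
    ∑ ij ∈ Finset.HasAntidiagonal.antidiagonal m, dd ij.1 * dd ij.2 = 2 * dd (m+1) := by
  have h : ∀ ij ∈ Finset.HasAntidiagonal.antidiagonal m, dd ij.1 * dd ij.2
      = (catalan ij.1 * catalan ij.2 : ℝ) / 4^(m+1) := by
    rintro ⟨i, j⟩ hij
    rw [Finset.HasAntidiagonal.mem_antidiagonal] at hij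
    simp only [dd]
    rw [div_mul_div_comm, ← pow_add]
    have hexp : (2:ℝ)^(2*i+1+(2*j+1)) = 4^(m+1) := by
      rw [show 2*i+1+(2*j+1) = 2*(m+1) by omega, pow_mul]; norm_num
    rw [hexp]
  rw [Finset.sum_congr rfl h, ← Finset.sum_div]
  have : (∑ ij ∈ Finset.HasAntidiagonal.antidiagonal m, (catalan ij.1 * catalan ij.2 : ℝ))
      = (catalan (m+1) : ℝ) := by
    rw_mod_cast [← catalan_succ' m]
  rw [this, dd]
  have h4 : (4:ℝ)^(m+1) = 2^(2*(m+1)) := by rw [pow_mul]; norm_num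
  rw [h4, pow_succ]
  ring

-- summability
lemma summable_dd_pow {y : ℝ} (hy0 : 0 ≤ y) (hy1 : y < 1) :
    Summable (fun m => dd m * y ^ m) := by
  apply Summable.of_nonneg_of_le (fun m => mul_nonneg (dd_nonneg m) (pow_nonneg hy0 m))
    (fun m => ?_) (Summable.mul_left (1/2) (summable_geometric_of_lt_one hy0 hy1))
  exact mul_le_mul_of_nonneg_right (dd_le_half m) (pow_nonneg hy0 m)

noncomputable def SS (y : ℝ) : ℝ := ∑' m, dd m * y ^ m

lemma SS_zero : SS 0 = 1/2 := by
  rw [SS, tsum_eq_single 0 (by intro b hb; simp [zero_pow hb])]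
  simp [dd]

lemma SS_quad {y : ℝ} (hy0 : 0 ≤ y) (hy1 : y < 1) : y * SS y ^ 2 - 2 * SS y + 1 = 0 := by
  have hs := summable_dd_pow hy0 hy1
  have hnorm : Summable fun m => ‖dd m * y ^ m‖ := by
    refine hs.congr fun m => ?_
    rw [Real.norm_eq_abs, _root_.abs_of_nonneg (mul_nonneg (dd_nonneg _) (pow_nonneg hy0 _))]
  have hmul := tsum_mul_tsum_eq_tsum_sum_antidiagonal_of_summable_norm hnorm hnorm
  have hconv : ∀ m : ℕ, (∑ ij ∈ Finset.HasAntidiagonal.antidiagonal m, (dd ij.1 * y^ij.1) * (dd ij.2 * y^ij.2))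
      = 2 * dd (m+1) * y ^ m := by
    intro m
    have : ∀ ij ∈ Finset.HasAntidiagonal.antidiagonal m, (dd ij.1 * y^ij.1) * (dd ij.2 * y^ij.2)
        = (dd ij.1 * dd ij.2) * y ^ m := by
      rintro ⟨i,j⟩ hij
      rw [Finset.HasAntidiagonal.mem_antidiagonal] at hij
      rw [← hij, pow_add]; ring
    rw [Finset.sum_congr rfl this, ← Finset.sum_mul, dd_conv]
  rw [funext hconv] at hmul
  -- hmul : SS y * SS y = ∑' m, 2 * dd (m+1) * y ^ m
  have hshift : HasSum (fun m => dd (m+1) * y^(m+1)) (SS y - dd 0 * y^0) := by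
    have := (hasSum_nat_add_iff' (f := fun m => dd m * y^m) 1 (g := SS y)).mpr hs.hasSum
    simpa using this
  have h2 : y * (SS y * SS y) = 2 * (SS y - dd 0 * y^0) := by
    have ht := hshift.tsum_eq
    simp only [SS] at ht ⊢
    rw [hmul, ← ht, ← tsum_mul_left, ← tsum_mul_left]
    exact tsum_congr fun m => by rw [pow_succ]; ring
  have hdd0 : dd 0 * y^0 = 1/2 := by simp [dd]
  rw [hdd0] at h2
  nlinarith [h2]

lemma SS_factor {y : ℝ} (hy0 : 0 ≤ y) (hy1 : y < 1) :
    ((1 + √(1-y)) * SS y - 1) * ((1 - √(1-y)) * SS y - 1) = 0 := by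
  have hsq : √(1-y) ^ 2 = 1 - y := Real.sq_sqrt (by linarith)
  have h := SS_quad hy0 hy1
  nlinarith [h, hsq]

lemma SS_eq {y : ℝ} (hy0 : 0 ≤ y) (hy1 : y < 1) : SS y = 1 / (1 + √(1-y)) := by
  rcases eq_or_lt_of_le hy0 with rfl | hy0'
  · rw [SS_zero]; norm_num
  set c := y with hc
  -- clamped version of SS, continuous everywhere
  set clamp : ℝ → ℝ := fun x => max 0 (min x c) with hclamp
  have hclamp_cont : Continuous clamp := by fun_prop
  have hclamp_mem : ∀ x, 0 ≤ clamp x ∧ clamp x ≤ c := fun x =>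
    ⟨le_max_left _ _, max_le (le_of_lt hy0') (min_le_right _ _)⟩
  have hclamp_eq : ∀ x ∈ Set.Icc 0 c, clamp x = x := by
    rintro x ⟨h0, h1⟩
    simp [hclamp, min_eq_left h1, max_eq_right h0]
  have hScont : Continuous (fun x => SS (clamp x)) := by
    simp only [SS]
    apply continuous_tsum (u := fun m => (1/2) * c ^ m)
    · intro i; fun_prop
    · exact Summable.mul_left _ (summable_geometric_of_lt_one (le_of_lt hy0') hy1)
    · intro n x
      rw [Real.norm_eq_abs, _root_.abs_of_nonneg (mul_nonneg (dd_nonneg _) (pow_nonneg (hclamp_mem x).1 _))]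
      exact mul_le_mul (dd_le_half n) (pow_le_pow_left₀ (hclamp_mem x).1 (hclamp_mem x).2 n)
        (pow_nonneg (hclamp_mem x).1 n) (by norm_num)
  set H : ℝ → ℝ := fun x => (1 + √(1 - clamp x)) * SS (clamp x) - 1 with hH
  have hHcont : Continuous H := by
    apply Continuous.sub _ continuous_const
    apply Continuous.mul _ hScont
    fun_prop
  have hH0 : H 0 = 0 := by
    have : clamp 0 = 0 := hclamp_eq 0 ⟨le_refl _, le_of_lt hy0'⟩
    simp [hH, this, SS_zero]; norm_num
  -- dichotomy
  have hdich : ∀ x ∈ Set.Icc (0:ℝ) c, H x = 0 ∨ 2 * √(1 - c) ≤ H x := by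
    rintro x ⟨hx0, hxc⟩
    have hx1 : x < 1 := lt_of_le_of_lt hxc hy1
    have hcl : clamp x = x := hclamp_eq x ⟨hx0, hxc⟩
    have hfac := SS_factor hx0 hx1
    rcases mul_eq_zero.mp hfac with h | h
    · left; simp only [hH, hcl]; linarith [h]
    · right
      -- (1 - √(1-x)) * SS x = 1
      have hs0 : 0 ≤ √(1-x) := Real.sqrt_nonneg _
      have hs1 : √(1-x) ≤ 1 := by
        have h' : √(1-x) ≤ √1 := Real.sqrt_le_sqrt (by linarith)
        simpa using h'
      have hspos : 0 < √(1-x) := Real.sqrt_pos.mpr (by linarith)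
      have hne : 1 - √(1-x) ≠ 0 := by
        intro habs
        have : √(1-x) = 1 := by linarith
        rw [this] at h
        simp at h
      have hpos' : 0 < 1 - √(1-x) := by
        rcases lt_or_eq_of_le hs1 with h' | h'
        · linarith
        · exact absurd (by linarith : 1 - √(1-x) = 0) hne
      have hSxval : SS x = 1 / (1 - √(1-x)) := by
        field_simp at h ⊢; linarith [h]
      have hmono : √(1-c) ≤ √(1-x) := Real.sqrt_le_sqrt (by linarith)
      simp only [hH, hcl, hSxval]
      have hcalc : (1 + √(1-x)) * (1/(1 - √(1-x))) - 1 = 2 * √(1-x) / (1 - √(1-x)) := by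
        field_simp; ring
      rw [hcalc]
      calc 2 * √(1-c) ≤ 2 * √(1-x) := by linarith
        _ ≤ 2 * √(1-x) / (1 - √(1-x)) := by
            rw [le_div_iff₀ hpos']
            nlinarith [hspos]
  -- IVT contradiction
  by_contra hne
  have hδpos : 0 < √(1-c) := Real.sqrt_pos.mpr (by linarith)
  have hHy : H c ≠ 0 := by
    intro habs
    apply hne
    have hcl : clamp c = c := hclamp_eq c ⟨le_of_lt hy0', le_refl _⟩
    simp only [hH, hcl] at habs
    rw [eq_div_iff (by positivity : (0:ℝ) ≠ 1 + √(1-c)).symm]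
    linear_combination habs
  have hHyge : 2 * √(1-c) ≤ H c := by
    rcases hdich c ⟨le_of_lt hy0', le_refl _⟩ with h | h
    · exact absurd h hHy
    · exact h
  have hmem : √(1-c) ∈ Set.Icc (H 0) (H c) := ⟨by rw [hH0]; positivity, by linarith⟩
  obtain ⟨x, hx, hHx⟩ := intermediate_value_Icc (le_of_lt hy0') hHcont.continuousOn hmem
  rcases hdich x hx with h | h
  · rw [hHx] at h; linarith
  · rw [hHx] at h; linarith

lemma integrand_deriv {x : ℝ} (hx0 : 0 < x) (hx1 : x < 1) :
    HasDerivAt (fun t => arcsin t - t / (1 + √(1 - t^2)))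
      (1 / (1 + √(1 - x^2))) x := by
  have hx2 : x^2 < 1 := by nlinarith
  have hpos : 0 < 1 - x^2 := by linarith
  have hs : 0 < √(1 - x^2) := Real.sqrt_pos.mpr hpos
  have hsq : √(1 - x^2)^2 = 1 - x^2 := Real.sq_sqrt (le_of_lt hpos)
  have harcsin : HasDerivAt arcsin (1 / √(1 - x^2)) x :=
    Real.hasDerivAt_arcsin (by nlinarith) (by nlinarith)
  have hinner : HasDerivAt (fun t : ℝ => 1 - t^2) (-(2*x)) x := by
    simpa using ((hasDerivAt_pow 2 x).const_sub 1)
  have hsqrt : HasDerivAt (fun t : ℝ => √(1 - t^2)) (-(2*x) / (2 * √(1 - x^2))) x := by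
    have := (Real.hasDerivAt_sqrt (ne_of_gt hpos)).comp x hinner
    exact this.congr_deriv (by ring)
  have hden : HasDerivAt (fun t : ℝ => 1 + √(1 - t^2)) (-(2*x) / (2 * √(1 - x^2))) x :=
    hsqrt.const_add 1
  have hdenne : (1 + √(1 - x^2)) ≠ 0 := by positivity
  have hdiv : HasDerivAt (fun t => t / (1 + √(1 - t^2)))
      ((1 * (1 + √(1 - x^2)) - x * (-(2*x) / (2 * √(1 - x^2)))) / (1 + √(1 - x^2))^2) x :=
    (hasDerivAt_id x).div hden hdenne
  have := harcsin.sub hdiv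
  refine this.congr_deriv (Eq.symm ?_)
  rw [div_sub_div _ _ (ne_of_gt hs) (by positivity : ((1 + √(1 - x^2))^2 : ℝ) ≠ 0)]
  rw [div_eq_div_iff (by positivity) (by positivity)]
  field_simp
  nlinarith [hsq, hs]

lemma integral_value : ∫ t in (0:ℝ)..1, 1 / (1 + √(1 - t^2)) = π/2 - 1 := by
  have hcont : Continuous (fun t : ℝ => 1 / (1 + √(1 - t^2))) := by
    apply Continuous.div continuous_const
    · fun_prop
    · intro t; positivity
  have hG : ContinuousOn (fun t => arcsin t - t / (1 + √(1 - t^2))) (Set.Icc 0 1) := by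
    apply ContinuousOn.sub (Real.continuous_arcsin.continuousOn)
    apply ContinuousOn.div continuousOn_id
    · fun_prop
    · intro t _; positivity
  rw [intervalIntegral.integral_eq_sub_of_hasDeriv_right_of_le zero_le_one hG
    (fun x hx => ((integrand_deriv hx.1 hx.2).hasDerivWithinAt))
    (hcont.intervalIntegrable 0 1)]
  norm_num [Real.arcsin_one, Real.sqrt_zero]

lemma hasSum_dd_div : HasSum (fun m => dd m / (2*m+1)) (π/2 - 1) := by
  -- the ENNReal-valued functions
  set F : ℕ → ℝ → ℝ≥0∞ := fun m t => ENNReal.ofReal (dd m * t ^ (2*m)) with hF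
  have hmeas : ∀ m, AEMeasurable (F m) (volume.restrict (Set.Ioo (0:ℝ) 1)) := by
    intro m
    exact (ENNReal.measurable_ofReal.comp ((measurable_id.pow_const (2*m)).const_mul (dd m))).aemeasurable
  -- per-term integral
  have hterm : ∀ m : ℕ, ∫⁻ t in Set.Ioo (0:ℝ) 1, F m t = ENNReal.ofReal (dd m / (2*m+1)) := by
    intro m
    have hint : IntegrableOn (fun t : ℝ => dd m * t ^ (2*m)) (Set.Ioo 0 1) := by
      have hc : Continuous (fun t : ℝ => dd m * t ^ (2*m)) := by fun_prop
      exact (hc.continuousOn.integrableOn_Icc).mono_set Set.Ioo_subset_Icc_self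
    rw [← ofReal_integral_eq_lintegral_ofReal hint]
    · congr 1
      have : ∫ t in Set.Ioo (0:ℝ) 1, dd m * t ^ (2*m)
          = ∫ t in (0:ℝ)..1, dd m * t ^ (2*m) := by
        rw [intervalIntegral.integral_of_le zero_le_one, MeasureTheory.integral_Ioc_eq_integral_Ioo]
      rw [this, intervalIntegral.integral_const_mul, integral_pow]
      push_cast; ring
    · filter_upwards [self_mem_ae_restrict measurableSet_Ioo] with t ht
      exact mul_nonneg (dd_nonneg m) (pow_nonneg (le_of_lt ht.1) _)
  -- pointwise sum
  have hpt : ∀ t ∈ Set.Ioo (0:ℝ) 1, (∑' m, F m t)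
      = ENNReal.ofReal (1 / (1 + √(1 - t^2))) := by
    rintro t ⟨ht0, ht1⟩
    have hy0 : (0:ℝ) ≤ t^2 := sq_nonneg t
    have hy1 : t^2 < 1 := by nlinarith
    have hsum := summable_dd_pow hy0 hy1
    have heqf : ∀ m, dd m * (t^2)^m = dd m * t^(2*m) := by
      intro m; rw [← pow_mul]
    have hsum' : Summable (fun m => dd m * t^(2*m)) := hsum.congr heqf
    rw [hF]
    rw [← ENNReal.ofReal_tsum_of_nonneg
      (fun m => mul_nonneg (dd_nonneg m) (pow_nonneg (le_of_lt ht0) _)) hsum']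
    congr 1
    have : ∑' m, dd m * t^(2*m) = SS (t^2) := by
      rw [SS]; exact tsum_congr fun m => (heqf m).symm
    rw [this, SS_eq hy0 hy1]
  -- combine
  have hswap := lintegral_tsum hmeas
  have hlhs : ∫⁻ t in Set.Ioo (0:ℝ) 1, (∑' m, F m t)
      = ENNReal.ofReal (π/2 - 1) := by
    rw [setLIntegral_congr_fun measurableSet_Ioo
      (fun t ht => hpt t ht)]
    have hint : IntegrableOn (fun t : ℝ => 1 / (1 + √(1 - t^2))) (Set.Ioo 0 1) := by
      have hc : Continuous (fun t : ℝ => 1 / (1 + √(1 - t^2))) := by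
        apply Continuous.div continuous_const
        · fun_prop
        · intro t; positivity
      exact (hc.continuousOn.integrableOn_Icc).mono_set Set.Ioo_subset_Icc_self
    rw [← ofReal_integral_eq_lintegral_ofReal hint]
    · congr 1
      rw [show ∫ t in Set.Ioo (0:ℝ) 1, 1 / (1 + √(1 - t^2))
          = ∫ t in (0:ℝ)..1, 1 / (1 + √(1 - t^2)) by
        rw [intervalIntegral.integral_of_le zero_le_one, MeasureTheory.integral_Ioc_eq_integral_Ioo]]
      exact integral_value
    · filter_upwards with t
      positivity
  have hkey : ∑' m, ENNReal.ofReal (dd m / (2*m+1)) = ENNReal.ofReal (π/2 - 1) := by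
    rw [← tsum_congr hterm, ← hswap, hlhs]
  -- convert back to ℝ
  have hne : ∀ m : ℕ, ENNReal.ofReal (dd m / (2*m+1)) ≠ ⊤ := fun m => ENNReal.ofReal_ne_top
  have htop : ∑' m, ENNReal.ofReal (dd m / (2*m+1)) ≠ ⊤ := by
    rw [hkey]; exact ENNReal.ofReal_ne_top
  have hsummable : Summable (fun m => dd m / (2*m+1)) := by
    have := ENNReal.summable_toReal htop
    refine this.congr fun m => ?_
    rw [ENNReal.toReal_ofReal (div_nonneg (dd_nonneg m) (by positivity))]
  have hval : ∑' m, dd m / (2*m+1) = π/2 - 1 := by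
    have h1 := ENNReal.tsum_toReal_eq hne
    rw [hkey] at h1
    have h2 : (ENNReal.ofReal (π/2-1)).toReal = π/2 - 1 :=
      ENNReal.toReal_ofReal (by nlinarith [Real.pi_gt_three])
    rw [h2] at h1
    rw [h1]
    exact tsum_congr fun m =>
      (ENNReal.toReal_ofReal (div_nonneg (dd_nonneg m) (by positivity))).symm
  exact hval ▸ hsummable.hasSum

lemma k1Coeff_zero : k1Coeff 0 = 1 / Real.pi := by simp [k1Coeff]
lemma k1Coeff_one : k1Coeff 1 = 1 / 2 := by simp [k1Coeff]

lemma k1Coeff_even (k : ℕ) : k1Coeff (2*k+2) = dd k / (2*k+1) / Real.pi := by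
  have h0 : (2*k+2) ≠ 0 := by omega
  have h1 : (2*k+2) ≠ 1 := by omega
  have h2 : (2*k+2) % 2 = 0 := by omega
  have h3 : (2*k+2) - 3 = 2*k - 1 := by omega
  have h4 : (2*k+2) / 2 = k+1 := by omega
  rw [k1Coeff]
  simp only [h0, h1, h2, h3, h4, if_false, if_true, ite_true, ite_false, reduceIte]
  rw [dd]
  have hcast : ((2*k+2 : ℕ) : ℝ) - 1 = 2*(k:ℝ)+1 := by push_cast; ring
  rw [hcast]
  have hπ : (0:ℝ) < Real.pi := Real.pi_pos
  have hk1 : (0:ℝ) < 2*(k:ℝ)+1 := by positivity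
  rw [div_div, div_div]
  rw [div_eq_div_iff (by positivity) (by positivity)]
  have hnat := catalan_mul_factorial k
  have hr : ((2*k-1).doubleFactorial : ℝ) * 2^(2*k+1) = (catalan k : ℝ) * ((k+1).factorial : ℝ) * 2^(k+1) := by
    have : (catalan k : ℝ) * ((k+1).factorial : ℝ) = 2^k * ((2*k-1).doubleFactorial : ℝ) := by
      exact_mod_cast congrArg (fun n : ℕ => (n : ℝ)) hnat
    rw [this, pow_add, ← pow_add]
    ring
  calc ((2*k-1).doubleFactorial : ℝ) * (2 ^ (2*k+1) * ((2*(k:ℝ)+1) * Real.pi))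
      = (((2*k-1).doubleFactorial : ℝ) * 2^(2*k+1)) * ((2*(k:ℝ)+1) * Real.pi) := by ring
    _ = ((catalan k : ℝ) * ((k+1).factorial : ℝ) * 2^(k+1)) * ((2*(k:ℝ)+1) * Real.pi) := by rw [hr]
    _ = (catalan k : ℝ) * ((2*(k:ℝ)+1) * ((k+1).factorial : ℝ) * 2^(k+1) * Real.pi) := by ring

lemma k1Coeff_odd (k : ℕ) (hk : k ≠ 0) : k1Coeff (2*k+1) = 0 := by
  have h0 : (2*k+1) ≠ 0 := by omega
  have h1 : (2*k+1) ≠ 1 := by omega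
  have h2 : (2*k+1) % 2 ≠ 0 := by omega
  simp [k1Coeff, h0, h1, h2, hk]

lemma k1Coeff_nonneg (m : ℕ) : 0 ≤ k1Coeff m := by
  rw [k1Coeff]
  rcases Nat.eq_zero_or_pos m with rfl | hm
  · simp; positivity
  rcases Nat.lt_or_ge m 2 with hm1 | hm2
  · interval_cases m <;> norm_num
  have h0 : m ≠ 0 := by omega
  have h1 : m ≠ 1 := by omega
  simp only [h0, h1, if_false, reduceIte]
  split
  · apply div_nonneg (Nat.cast_nonneg _)
    have : (1:ℝ) ≤ (m:ℝ) - 1 + 1 := by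
      have : (2:ℝ) ≤ (m:ℝ) := by exact_mod_cast hm2
      linarith
    have hm1 : (0:ℝ) < (m:ℝ) - 1 := by
      have : (2:ℝ) ≤ (m:ℝ) := by exact_mod_cast hm2
      linarith
    positivity
  · exact le_refl 0

lemma hasSum_k1Coeff : HasSum k1Coeff 1 := by
  have hπ : (0:ℝ) < Real.pi := Real.pi_pos
  have hshift : HasSum (fun k => k1Coeff (2*(k+1))) ((Real.pi/2 - 1)/Real.pi) := by
    have h := hasSum_dd_div.div_const Real.pi
    have heq : (fun k => k1Coeff (2*(k+1))) = fun k => dd k / (2*k+1) / Real.pi := by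
      funext k
      rw [show 2*(k+1) = 2*k+2 by ring, k1Coeff_even k]
    rw [heq]
    exact h
  have hEven : HasSum (fun k => k1Coeff (2*k)) ((Real.pi/2 - 1)/Real.pi + 1/Real.pi) := by
    apply (hasSum_nat_add_iff' (f := fun k => k1Coeff (2*k)) 1).1
    have hs : ∑ i ∈ Finset.range 1, k1Coeff (2*i) = 1/Real.pi := by
      simp [k1Coeff_zero]
    rw [hs]
    simpa using hshift
  have hOdd : HasSum (fun k => k1Coeff (2*k+1)) (1/2) := by
    have h := hasSum_single (f := fun k => k1Coeff (2*k+1)) 0 (by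
      intro b hb
      exact k1Coeff_odd b hb)
    simpa [k1Coeff_one] using h
  have htot := hEven.even_add_odd hOdd
  have hval : (Real.pi/2 - 1)/Real.pi + 1/Real.pi + 1/2 = 1 := by
    field_simp
    ring
  rwa [hval] at htot

lemma summable_k1_complex {z : ℂ} (hz : ‖z‖ ≤ 1) :
    Summable (fun n => (k1Coeff n : ℂ) * z ^ n) := by
  apply Summable.of_norm_bounded hasSum_k1Coeff.summable
  intro n
  rw [norm_mul, Complex.norm_real, norm_pow, Real.norm_eq_abs,
    _root_.abs_of_nonneg (k1Coeff_nonneg n)]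
  calc k1Coeff n * ‖z‖^n ≤ k1Coeff n * 1 :=
        mul_le_mul_of_nonneg_left (pow_le_one₀ (norm_nonneg z) hz) (k1Coeff_nonneg n)
    _ = k1Coeff n := mul_one _

theorem k1_le_one_on_closed_disk (z : ℂ) (hz : ‖z‖ ≤ 1) :
    ‖k1Series z‖ ≤ 1 ∧ (‖k1Series z‖ = 1 ↔ z = 1) := by
  have hsum := summable_k1_complex hz
  have hnorm_le : ∀ n, ‖(k1Coeff n : ℂ) * z ^ n‖ ≤ k1Coeff n := by
    intro n
    rw [norm_mul, Complex.norm_real, norm_pow, Real.norm_eq_abs,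
      _root_.abs_of_nonneg (k1Coeff_nonneg n)]
    calc k1Coeff n * ‖z‖^n ≤ k1Coeff n * 1 :=
          mul_le_mul_of_nonneg_left (pow_le_one₀ (norm_nonneg z) hz) (k1Coeff_nonneg n)
      _ = k1Coeff n := mul_one _
  have hsumnorm : Summable (fun n => ‖(k1Coeff n : ℂ) * z ^ n‖) :=
    Summable.of_nonneg_of_le (fun n => norm_nonneg _) hnorm_le hasSum_k1Coeff.summable
  have hbound : ‖k1Series z‖ ≤ 1 := by
    calc ‖k1Series z‖ ≤ ∑' n, ‖(k1Coeff n : ℂ) * z ^ n‖ := norm_tsum_le_tsum_norm hsumnorm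
      _ ≤ ∑' n, k1Coeff n := Summable.tsum_le_tsum hnorm_le hsumnorm hasSum_k1Coeff.summable
      _ = 1 := hasSum_k1Coeff.tsum_eq
  refine ⟨hbound, ?_, ?_⟩
  · -- equality implies z = 1
    intro h1
    set S := k1Series z with hS
    have hSsum : HasSum (fun n => (k1Coeff n : ℂ) * z ^ n) S := hsum.hasSum
    have hmulsum : HasSum (fun n => (starRingEnd ℂ) S * ((k1Coeff n : ℂ) * z ^ n))
        ((starRingEnd ℂ) S * S) := hSsum.mul_left _
    have hre : HasSum (fun n => ((starRingEnd ℂ) S * ((k1Coeff n : ℂ) * z ^ n)).re)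
        (((starRingEnd ℂ) S * S).re) := Complex.hasSum_re hmulsum
    have hval : ((starRingEnd ℂ) S * S).re = 1 := by
      rw [show (starRingEnd ℂ) S * S = ((Complex.normSq S : ℝ) : ℂ) by
        rw [← Complex.normSq_eq_conj_mul_self]]
      rw [Complex.ofReal_re, Complex.normSq_eq_norm_sq]
      rw [h1]
      norm_num
    rw [hval] at hre
    have hle : ∀ n, ((starRingEnd ℂ) S * ((k1Coeff n : ℂ) * z ^ n)).re ≤ k1Coeff n := by
      intro n
      calc ((starRingEnd ℂ) S * ((k1Coeff n : ℂ) * z ^ n)).re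
          ≤ ‖(starRingEnd ℂ) S * ((k1Coeff n : ℂ) * z ^ n)‖ := Complex.re_le_norm _
        _ = ‖S‖ * ‖(k1Coeff n : ℂ) * z ^ n‖ := by
            rw [norm_mul, RCLike.norm_conj]
        _ = ‖(k1Coeff n : ℂ) * z ^ n‖ := by rw [h1, one_mul]
        _ ≤ k1Coeff n := hnorm_le n
    have heq : ∀ n, ((starRingEnd ℂ) S * ((k1Coeff n : ℂ) * z ^ n)).re = k1Coeff n := by
      intro n
      by_contra hne
      have hlt : ((starRingEnd ℂ) S * ((k1Coeff n : ℂ) * z ^ n)).re < k1Coeff n :=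
        lt_of_le_of_ne (hle n) hne
      exact absurd (hasSum_lt hle hlt hre hasSum_k1Coeff) (lt_irrefl 1)
    -- n = 0 : conj S has re = 1
    have h0 := heq 0
    rw [k1Coeff_zero] at h0
    simp only [pow_zero, mul_one] at h0
    have hconjre : ((starRingEnd ℂ) S).re = 1 := by
      have hπ : Real.pi ≠ 0 := ne_of_gt Real.pi_pos
      have : ((starRingEnd ℂ) S * ((1/Real.pi : ℝ) : ℂ)).re
          = ((starRingEnd ℂ) S).re * (1/Real.pi) := by
        rw [Complex.mul_re]
        simp
      rw [this] at h0
      field_simp at h0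
      exact h0
    have hSnorm : ‖(starRingEnd ℂ) S‖ = 1 := by rw [RCLike.norm_conj, h1]
    have hconjS : (starRingEnd ℂ) S = 1 := by
      have him : ((starRingEnd ℂ) S).im = 0 := by
        have h2 : ((starRingEnd ℂ) S).re^2 + ((starRingEnd ℂ) S).im^2 = 1 := by
          have h3 := Complex.sq_norm ((starRingEnd ℂ) S)
          rw [hSnorm] at h3
          rw [Complex.normSq_apply] at h3
          nlinarith [h3]
        nlinarith [h2, hconjre]
      exact Complex.ext (by rw [hconjre]; rfl) (by rw [him]; rfl)
    -- n = 1 : z.re = 1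
    have h1' := heq 1
    rw [hconjS, one_mul, k1Coeff_one] at h1'
    simp only [pow_one] at h1'
    have hzre : z.re = 1 := by
      have : (((1/2 : ℝ) : ℂ) * z).re = (1/2) * z.re := by
        rw [Complex.mul_re]; simp
      rw [this] at h1'
      linarith
    have hzim : z.im = 0 := by
      have h2 : z.re^2 + z.im^2 ≤ 1 := by
        have := Complex.sq_norm z
        have h3 : ‖z‖ ≤ 1 := hz
        nlinarith [norm_nonneg z, Complex.normSq_apply z]
      nlinarith [hzre]
    exact Complex.ext (by rw [hzre]; rfl) (by rw [hzim]; rfl)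
  · -- z = 1 implies equality
    rintro rfl
    have h : HasSum (fun n => (k1Coeff n : ℂ) * (1:ℂ) ^ n) ((1:ℝ):ℂ) := by
      have := hasSum_k1Coeff.map Complex.ofRealCLM Complex.ofRealCLM.continuous
      simpa [Function.comp_def] using this
    rw [show k1Series 1 = ∑' n, (k1Coeff n : ℂ) * (1:ℂ)^n from rfl, h.tsum_eq]
    simp
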